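/- Let ω(A) = Tr(A·R) be the linear functional with density matrix R = Σ_{𝔍,𝔍'∈𝒫₊} r_{𝔍𝔍'}·Θ(C_𝔍)∘C_{𝔍'}. Then ω is reflection positive on 𝔄₊ (i.e. 0 ≤ ω(Θ(A)∘A) for all A ∈ 𝔄₊) if and only if the matrix (r_{𝔍𝔍'})_{𝔍,𝔍'∈𝒫₊} is positive semidefinite. -/

import Mathlib

open ComplexOrder

noncomputable section

/-- The setting of the paper: a finite set `Λ` with a fixed-point free involution `ϑ`
exchanging `Λp` and its complement, the Clifford algebra (algebra of Majoranas) `carrier`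
with self-adjoint generators `c i`, the global gauge automorphism `gauge`, the antilinear
reflection `*`-automorphism `Θ`, a square root `ζ` of `-1`, the twisted product `twist`,
a choice `P` of orderings of the subsets of `Λp` (giving the bases
`{C J : J ∈ P}` of `𝔄₊` and `{Θ(C J) ∘ C J' : J, J' ∈ P}` of `𝔄`),
and the tracial state `Tr` picking out the coefficient of `1` in the basis expansion. -/
structure MajoranaSetting where
  Λ : Type
  [fintypeΛ : Fintype Λ]
  [deceqΛ : DecidableEq Λ]
  ϑ : Λ → Λ
  ϑ_invol : Function.Involutive ϑ
  ϑ_fixfree : ∀ i, ϑ i ≠ i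
  Λp : Finset Λ
  ϑ_exch : ∀ i, i ∈ Λp ↔ ϑ i ∉ Λp
  carrier : Type
  [nring : NormedRing carrier]
  [nalg : NormedAlgebra ℂ carrier]
  [cmpl : CompleteSpace carrier]
  [starring : StarRing carrier]
  [starmod : StarModule ℂ carrier]
  c : Λ → carrier
  c_star : ∀ i, star (c i) = c i
  clifford : ∀ i j, c i * c j + c j * c i = if i = j then (2 : carrier) else 0
  gauge : carrier ≃ₐ[ℂ] carrier
  gauge_c : ∀ i, gauge (c i) = - c i
  Θ : carrier → carrier
  Θ_add : ∀ x y, Θ (x + y) = Θ x + Θ y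
  Θ_smul : ∀ (z : ℂ) (x), Θ (z • x) = (starRingEnd ℂ z) • Θ x
  Θ_mul : ∀ x y, Θ (x * y) = Θ x * Θ y
  Θ_star : ∀ x, Θ (star x) = star (Θ x)
  Θ_invol : ∀ x, Θ (Θ x) = x
  Θ_c : ∀ i, Θ (c i) = c (ϑ i)
  ζ : ℂ
  ζ_sq : ζ ^ 2 = -1
  twist : carrier → carrier → carrier
  twist_add_left : ∀ x x' y, twist (x + x') y = twist x y + twist x' y
  twist_add_right : ∀ x y y', twist x (y + y') = twist x y + twist x y'
  twist_smul_left : ∀ (z : ℂ) (x y), twist (z • x) y = z • twist x y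
  twist_smul_right : ∀ (z : ℂ) (x y), twist x (z • y) = z • twist x y
  twist_spec : ∀ (Am Ap Bm Bp : carrier) (a b a' b' : ℕ),
    a ≤ 1 → b ≤ 1 → a' ≤ 1 → b' ≤ 1 →
    Am ∈ Algebra.adjoin ℂ (c '' {i | i ∉ Λp}) →
    Ap ∈ Algebra.adjoin ℂ (c '' {i | i ∈ Λp}) →
    Bm ∈ Algebra.adjoin ℂ (c '' {i | i ∉ Λp}) →
    Bp ∈ Algebra.adjoin ℂ (c '' {i | i ∈ Λp}) →
    gauge Am = ((-1 : ℂ) ^ a) • Am →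
    gauge Ap = ((-1 : ℂ) ^ b) • Ap →
    gauge Bm = ((-1 : ℂ) ^ a') • Bm →
    gauge Bp = ((-1 : ℂ) ^ b') • Bp →
    twist (Am * Ap) (Bm * Bp)
      = ζ ^ ((a * b' : ℤ) - (b * a' : ℤ)) • (Am * Ap * (Bm * Bp))
  P : Finset (List Λ)
  P_nodup : ∀ J ∈ P, J.Nodup
  P_sub : ∀ J ∈ P, ∀ i ∈ J, i ∈ Λp
  P_unique : ∀ s : Finset Λ, s ⊆ Λp → ∃! J, J ∈ P ∧ J.toFinset = s
  Tr : carrier →ₗ[ℂ] ℂ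
  Tr_basis : ∀ J ∈ P, ∀ J' ∈ P,
    Tr (twist (Θ ((J.map c).prod)) ((J'.map c).prod))
      = if J = [] ∧ J' = [] then 1 else 0
  basis_indep : LinearIndependent ℂ
    (fun p : {J // J ∈ P} × {J // J ∈ P} =>
      twist (Θ ((p.1.1.map c).prod)) ((p.2.1.map c).prod))
  basis_span : ∀ x : carrier, x ∈ Submodule.span ℂ
    (Set.range fun p : {J // J ∈ P} × {J // J ∈ P} =>
      twist (Θ ((p.1.1.map c).prod)) ((p.2.1.map c).prod))
  plus_span : ∀ x ∈ Algebra.adjoin ℂ (c '' {i | i ∈ Λp}),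
    x ∈ Submodule.span ℂ (Set.range fun J : {J // J ∈ P} => ((J.1.map c).prod))

attribute [instance] MajoranaSetting.fintypeΛ MajoranaSetting.deceqΛ
  MajoranaSetting.nring MajoranaSetting.nalg MajoranaSetting.cmpl
  MajoranaSetting.starring MajoranaSetting.starmod

namespace MajoranaSetting

variable (S : MajoranaSetting)

/-- The subalgebra `𝔄₊` generated by the Majoranas on the `+` side. -/
def Aplus : Subalgebra ℂ S.carrier := Algebra.adjoin ℂ (S.c '' {i | i ∈ S.Λp})

/-- The subalgebra `𝔄₋` generated by the Majoranas on the `-` side. -/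
def Aminus : Subalgebra ℂ S.carrier := Algebra.adjoin ℂ (S.c '' {i | i ∉ S.Λp})

/-- The monomial `C_𝔍 = c_{i₁} ⋯ c_{i_k}`. -/
def C (J : List S.Λ) : S.carrier := (J.map S.c).prod

/-- `q_𝔍 = (-1)^{k(k-1)/2}`. -/
def q (J : List S.Λ) : ℂ := (-1 : ℂ) ^ (J.length * (J.length - 1) / 2)

/-- `s_𝔍 = ζ^{k(k-1)/2}`. -/
def sgn (J : List S.Λ) : ℂ := S.ζ ^ (J.length * (J.length - 1) / 2)

/-- The exponential `e^x` in the (finite-dimensional) algebra `𝔄`. -/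
def expm (x : S.carrier) : S.carrier := NormedSpace.exp x

/-- The Hamiltonian `H = -∑_{𝔍,𝔍' ∈ 𝒫₊} J_{𝔍𝔍'} Θ(C_𝔍) ∘ C_𝔍'`
determined by coupling constants `Jc`. -/
def Ham (Jc : List S.Λ → List S.Λ → ℂ) : S.carrier :=
  - ∑ J ∈ S.P, ∑ J' ∈ S.P, Jc J J' • S.twist (S.Θ (S.C J)) (S.C J')

/-- The index type of the basis `{C J : J ∈ 𝒫₊}`. -/
abbrev PIdx := {J : List S.Λ // J ∈ S.P}

/-- The index type `𝒫₊ - {∅}` of couplings across the reflection plane. -/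
abbrev PIdx0 := {p : S.PIdx // p.1 ≠ []}

/-- The full matrix of coupling constants. -/
def Jmat (Jc : List S.Λ → List S.Λ → ℂ) : Matrix S.PIdx S.PIdx ℂ :=
  Matrix.of fun p q => Jc p.1 q.1

/-- The matrix `J⁰` of coupling constants across the reflection plane. -/
def Jmat0 (Jc : List S.Λ → List S.Λ → ℂ) : Matrix S.PIdx0 S.PIdx0 ℂ :=
  Matrix.of fun p q => Jc p.1.1 q.1.1

end MajoranaSetting

namespace MajoranaSetting
variable (S : MajoranaSetting)

lemma two_c : (2 : S.carrier) = (2:ℂ) • (1 : S.carrier) := by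
  rw [two_smul]; norm_num

lemma c_sq (i : S.Λ) : S.c i * S.c i = 1 := by
  have h := S.clifford i i
  rw [if_pos rfl] at h
  have h2 : (2:ℂ) • (S.c i * S.c i) = (2:ℂ) • (1 : S.carrier) := by
    rw [two_smul, h, S.two_c, two_smul]
  exact smul_right_injective S.carrier (by norm_num) h2

lemma c_anticomm {i j : S.Λ} (h : i ≠ j) : S.c i * S.c j = -(S.c j * S.c i) := by
  have hc := S.clifford i j
  rw [if_neg h] at hc
  exact eq_neg_of_add_eq_zero_left hc

lemma C_nil : S.C [] = 1 := rfl

lemma C_cons (i : S.Λ) (J : List S.Λ) : S.C (i :: J) = S.c i * S.C J := by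
  simp [MajoranaSetting.C]

lemma C_append (J K : List S.Λ) : S.C (J ++ K) = S.C J * S.C K := by
  simp [MajoranaSetting.C]

lemma Θ_one : S.Θ 1 = 1 := by
  have h := S.Θ_mul 1 (S.Θ 1)
  rw [one_mul, S.Θ_invol] at h
  calc S.Θ 1 = S.Θ 1 * 1 := (mul_one _).symm
    _ = 1 := h.symm

lemma Θ_zero : S.Θ 0 = 0 := by
  have := S.Θ_smul 0 0
  simpa using this

lemma Θ_C (J : List S.Λ) : S.Θ (S.C J) = S.C (J.map S.ϑ) := by
  induction J with
  | nil => simpa [S.C_nil] using S.Θ_one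
  | cons i T ih =>
    rw [S.C_cons, S.Θ_mul, S.Θ_c, ih, List.map_cons, S.C_cons]

lemma gauge_C (J : List S.Λ) : S.gauge (S.C J) = ((-1:ℂ) ^ J.length) • S.C J := by
  induction J with
  | nil => simp [S.C_nil]
  | cons i T ih =>
    rw [S.C_cons, map_mul, S.gauge_c, ih, List.length_cons]
    simp [pow_succ, mul_smul_comm]

end MajoranaSetting
namespace MajoranaSetting
variable (S : MajoranaSetting)

/-- move `c i` through `C T` when `i` is not in `T` -/
lemma c_move (T : List S.Λ) (i : S.Λ) (h : ∀ j ∈ T, j ≠ i) :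
    S.c i * S.C T = ((-1:ℂ) ^ T.length) • (S.C T * S.c i) := by
  induction T with
  | nil => simp [S.C_nil]
  | cons j T ih =>
    have hji : j ≠ i := h j (by simp)
    have hT : ∀ k ∈ T, k ≠ i := fun k hk => h k (by simp [hk])
    rw [S.C_cons, ← mul_assoc, S.c_anticomm (Ne.symm hji), neg_mul, mul_assoc,
      ih hT, List.length_cons]
    simp [pow_succ, mul_smul_comm, mul_assoc]

lemma neg_one_pow_double (n : ℕ) : ((-1:ℂ)) ^ (n + n) = 1 := by
  rw [← two_mul, pow_mul]; norm_num

/-- `C J * C J = q J • 1` for a nodup list -/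
lemma C_mul_self (J : List S.Λ) (h : J.Nodup) : S.C J * S.C J = S.q J • 1 := by
  induction J with
  | nil => simp [S.C_nil, MajoranaSetting.q]
  | cons i T ih =>
    have hi : i ∉ T := (List.nodup_cons.mp h).1
    have hT : T.Nodup := (List.nodup_cons.mp h).2
    have hmove : ∀ j ∈ T, j ≠ i := fun j hj => fun e => hi (e ▸ hj)
    have hre : S.C (i :: T) * S.C (i :: T)
        = S.c i * (S.C T * S.c i) * S.C T := by
      rw [S.C_cons]; noncomm_ring
    rw [hre]
    have h2 : S.C T * S.c i = ((-1:ℂ) ^ T.length) • (S.c i * S.C T) := by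
      rw [S.c_move T i hmove, smul_smul, ← pow_add, neg_one_pow_double, one_smul]
    rw [h2, mul_smul_comm, smul_mul_assoc, ← mul_assoc, S.c_sq, one_mul, ih hT, smul_smul]
    congr 1
    show (-1:ℂ) ^ T.length * (-1:ℂ) ^ (T.length * (T.length - 1) / 2)
        = (-1:ℂ) ^ ((T.length + 1) * (T.length + 1 - 1) / 2)
    rw [← pow_add, neg_one_pow_eq_pow_mod_two, neg_one_pow_eq_pow_mod_two ((T.length+1) * _ / 2)]
    congr 1
    have hev : Even (T.length * (T.length - 1)) := by
      rcases Nat.even_or_odd T.length with he | ho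
      · exact he.mul_right _
      · exact Even.mul_left (Nat.Odd.sub_odd ho odd_one) _
    rw [Nat.even_iff] at hev
    have h3 : (T.length + 1) * (T.length + 1 - 1)
        = T.length * (T.length - 1) + 2 * T.length := by
      rcases hn : T.length with _ | n
      · simp
      · simp only [Nat.add_sub_cancel, Nat.succ_sub_one]
        ring
    omega

end MajoranaSetting
namespace MajoranaSetting
variable (S : MajoranaSetting)

def IsSign (ε : ℂ) : Prop := ε = 1 ∨ ε = -1

lemma IsSign.mul {ε ε' : ℂ} (h : IsSign ε) (h' : IsSign ε') : IsSign (ε * ε') := by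
  rcases h with h | h <;> rcases h' with h' | h' <;> simp [IsSign, h, h']

lemma IsSign.neg {ε : ℂ} (h : IsSign ε) : IsSign (-ε) := by
  rcases h with h | h <;> simp [IsSign, h]

lemma isSign_one : IsSign 1 := Or.inl rfl

lemma isSign_neg_one_pow (n : ℕ) : IsSign ((-1:ℂ)^n) := by
  rcases Nat.even_or_odd n with h | h
  · exact Or.inl (h.neg_one_pow)
  · exact Or.inr (h.neg_one_pow)

lemma isSign_q (J : List S.Λ) : IsSign (S.q J) := isSign_neg_one_pow _

/-- multiplying by `c i` removes a copy of `i` -/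
lemma c_mul_C_erase {L : List S.Λ} {i : S.Λ} (hL : L.Nodup) (hi : i ∈ L) :
    ∃ ε : ℂ, IsSign ε ∧ S.c i * S.C L = ε • S.C (L.erase i) := by
  induction L with
  | nil => simp at hi
  | cons j T ih =>
    have hjT : j ∉ T := (List.nodup_cons.mp hL).1
    have hT : T.Nodup := (List.nodup_cons.mp hL).2
    by_cases hij : i = j
    · subst hij
      refine ⟨1, isSign_one, ?_⟩
      rw [List.erase_cons_head, S.C_cons, ← mul_assoc, S.c_sq, one_mul, one_smul]
    · have hiT : i ∈ T := by
        rcases List.mem_cons.mp hi with h | h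
        · exact absurd h hij
        · exact h
      obtain ⟨ε, hsgn, heq⟩ := ih hT hiT
      refine ⟨-ε, hsgn.neg, ?_⟩
      rw [List.erase_cons_tail (by simpa using Ne.symm hij), S.C_cons, S.C_cons,
        ← mul_assoc, S.c_anticomm hij, neg_mul, mul_assoc, heq]
      simp [mul_smul_comm]

/-- permutations change `C` by a sign -/
lemma C_perm {J L : List S.Λ} (h : J.Perm L) :
    ∃ ε : ℂ, IsSign ε ∧ S.C J = ε • S.C L := by
  induction h with
  | nil => exact ⟨1, isSign_one, by simp⟩
  | cons x _ ih =>
    obtain ⟨ε, hsgn, heq⟩ := ih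
    exact ⟨ε, hsgn, by rw [S.C_cons, heq, S.C_cons, mul_smul_comm]⟩
  | swap x y l =>
    by_cases hxy : x = y
    · subst hxy; exact ⟨1, isSign_one, by simp⟩
    · refine ⟨-1, Or.inr rfl, ?_⟩
      rw [S.C_cons, S.C_cons, S.C_cons, S.C_cons, ← mul_assoc, ← mul_assoc,
        S.c_anticomm (Ne.symm hxy)]
      simp
  | trans h1 h2 ih1 ih2 =>
    obtain ⟨ε, hs, he⟩ := ih1
    obtain ⟨ε', hs', he'⟩ := ih2
    exact ⟨ε * ε', hs.mul hs', by rw [he, he', smul_smul]⟩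

/-- reduction of an arbitrary word to a nodup word -/
lemma C_reduce (M : List S.Λ) :
    ∃ (ε : ℂ) (L : List S.Λ), IsSign ε ∧ L.Nodup ∧ (∀ i, i ∈ L ↔ Odd (M.count i)) ∧
      (∀ i ∈ L, i ∈ M) ∧ S.C M = ε • S.C L := by
  induction M with
  | nil => exact ⟨1, [], isSign_one, List.nodup_nil, by simp, by simp, by simp⟩
  | cons i T ih =>
    obtain ⟨ε, L, hs, hnd, hodd, hsub, heq⟩ := ih
    by_cases hiL : i ∈ L
    · obtain ⟨ε', hs', heq'⟩ := S.c_mul_C_erase hnd hiL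
      refine ⟨ε * ε', L.erase i, hs.mul hs', (hnd.erase i), ?_, ?_, ?_⟩
      · intro j
        rw [hnd.mem_erase_iff]
        by_cases hj : j = i
        · subst hj
          simp only [List.count_cons_self, ne_eq, not_true_eq_false, false_and, false_iff]
          rw [Nat.odd_add_one, Nat.not_odd_iff_even, ← Nat.not_odd_iff_even]
          simpa using (hodd j).mp hiL
        · simp only [ne_eq, hj, not_false_eq_true, true_and, hodd j,
            List.count_cons_of_ne (Ne.symm hj)]
      · intro j hj
        exact List.mem_cons_of_mem i (hsub j (List.mem_of_mem_erase hj))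
      · rw [S.C_cons, heq, mul_smul_comm, heq', smul_smul]
    · refine ⟨ε, i :: L, hs, List.nodup_cons.mpr ⟨hiL, hnd⟩, ?_, ?_, ?_⟩
      · intro j
        by_cases hj : j = i
        · subst hj
          simp only [List.mem_cons, true_or, true_iff, List.count_cons_self]
          rw [Nat.odd_add_one, Nat.not_odd_iff_even]
          have := (hodd j).not.mp ?_
          · rwa [Nat.not_odd_iff_even] at this
          · exact hiL
        · simp [List.mem_cons, hj, hodd j, List.count_cons_of_ne (Ne.symm hj)]
      · intro j hj
        rcases List.mem_cons.mp hj with h | h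
        · simp [h]
        · exact List.mem_cons_of_mem i (hsub j h)
      · rw [S.C_cons, heq, mul_smul_comm, S.C_cons]

end MajoranaSetting
namespace MajoranaSetting
variable (S : MajoranaSetting)

lemma C_mem_adjoin {s : Set S.Λ} {J : List S.Λ} (h : ∀ i ∈ J, i ∈ s) :
    S.C J ∈ Algebra.adjoin ℂ (S.c '' s) := by
  induction J with
  | nil => rw [S.C_nil]; exact one_mem _
  | cons i T ih =>
    rw [S.C_cons]
    exact mul_mem (Algebra.subset_adjoin ⟨i, h i (by simp), rfl⟩)
      (ih fun j hj => h j (by simp [hj]))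

lemma ΘC_mem_minus {J : List S.Λ} (h : ∀ i ∈ J, i ∈ S.Λp) :
    S.Θ (S.C J) ∈ Algebra.adjoin ℂ (S.c '' {i | i ∉ S.Λp}) := by
  rw [S.Θ_C]
  refine S.C_mem_adjoin ?_
  intro i hi
  obtain ⟨j, hj, rfl⟩ := List.mem_map.mp hi
  exact (S.ϑ_exch j).mp (h j hj)

lemma gauge_ΘC (J : List S.Λ) : S.gauge (S.Θ (S.C J)) = ((-1:ℂ) ^ J.length) • S.Θ (S.C J) := by
  rw [S.Θ_C, S.gauge_C, List.length_map]

lemma ζ_ne_zero : S.ζ ≠ 0 := by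
  intro h
  have := S.ζ_sq
  rw [h] at this
  norm_num at this

/-- The twisted product on basis monomials. -/
lemma twist_CC {J J' : List S.Λ} (hJ : ∀ i ∈ J, i ∈ S.Λp) (hJ' : ∀ i ∈ J', i ∈ S.Λp) :
    S.twist (S.Θ (S.C J)) (S.C J')
      = (S.ζ ^ (J.length % 2 * (J'.length % 2))) • (S.Θ (S.C J) * S.C J') := by
  have h := S.twist_spec (S.Θ (S.C J)) 1 1 (S.C J') (J.length % 2) 0 0 (J'.length % 2)
    (Nat.le_of_lt_succ (Nat.mod_lt _ (by norm_num))) (by norm_num) (by norm_num)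
    (Nat.le_of_lt_succ (Nat.mod_lt _ (by norm_num)))
    (S.ΘC_mem_minus hJ) (one_mem _) (one_mem _) (S.C_mem_adjoin hJ')
    (by rw [S.gauge_ΘC, neg_one_pow_eq_pow_mod_two])
    (by simp) (by simp)
    (by rw [S.gauge_C, neg_one_pow_eq_pow_mod_two])
  rw [mul_one, one_mul] at h
  rw [h, ← zpow_natCast]
  norm_num

/-- commuting blocks with pointwise distinct entries -/
lemma C_cross {J K : List S.Λ} (h : ∀ i ∈ J, ∀ j ∈ K, i ≠ j) :
    S.C J * S.C K = ((-1:ℂ) ^ (J.length * K.length)) • (S.C K * S.C J) := by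
  induction J with
  | nil => simp [S.C_nil]
  | cons i T ih =>
    have hi : ∀ j ∈ K, j ≠ i := fun j hj => (h i (by simp) j hj).symm
    have hT : ∀ a ∈ T, ∀ j ∈ K, a ≠ j := fun a ha j hj => h a (by simp [ha]) j hj
    rw [S.C_cons, mul_assoc, ih hT, mul_smul_comm, ← mul_assoc, S.c_move K i hi,
      smul_mul_assoc, smul_smul, mul_assoc, ← S.C_cons, ← pow_add, List.length_cons]
    congr 2
    ring

lemma nil_mem_P : [] ∈ S.P := by
  obtain ⟨J, ⟨hJP, hJ0⟩, _⟩ := S.P_unique ∅ (Finset.empty_subset _)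
  rwa [(List.toFinset_eq_empty_iff _).mp hJ0] at hJP

lemma P_inj {J K : List S.Λ} (hJ : J ∈ S.P) (hK : K ∈ S.P) (h : J.toFinset = K.toFinset) :
    J = K := by
  obtain ⟨L, _, hu⟩ := S.P_unique K.toFinset (fun i hi => S.P_sub K hK i (List.mem_toFinset.mp hi))
  rw [hu J ⟨hJ, h⟩, hu K ⟨hK, rfl⟩]

lemma Tr_one : S.Tr 1 = 1 := by
  have h := S.Tr_basis [] S.nil_mem_P [] S.nil_mem_P
  simp only [List.map_nil, List.prod_nil, and_self, if_true] at h
  have ht : S.twist (S.Θ 1) 1 = 1 := by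
    have := S.twist_CC (J := []) (J' := []) (by simp) (by simp)
    simpa [S.C_nil, S.Θ_one] using this
  rwa [ht] at h

/-- the trace of an untwisted basis monomial -/
lemma Tr_ΘCC {L L' : List S.Λ} (hL : L ∈ S.P) (hL' : L' ∈ S.P) :
    S.Tr (S.Θ (S.C L) * S.C L') = if L = [] ∧ L' = [] then 1 else 0 := by
  have hb := S.Tr_basis L hL L' hL'
  have hLp : ∀ i ∈ L, i ∈ S.Λp := S.P_sub L hL
  have hLp' : ∀ i ∈ L', i ∈ S.Λp := S.P_sub L' hL'
  have ht := S.twist_CC hLp hLp'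
  have hCL : (L.map S.c).prod = S.C L := rfl
  have hCL' : (L'.map S.c).prod = S.C L' := rfl
  rw [hCL, hCL', ht, map_smul, smul_eq_mul] at hb
  by_cases hcase : L = [] ∧ L' = []
  · obtain ⟨h1, h2⟩ := hcase
    subst h1; subst h2
    simpa using hb
  · rw [if_neg hcase] at hb ⊢
    rcases mul_eq_zero.mp hb with h | h
    · exact absurd h (pow_ne_zero _ S.ζ_ne_zero)
    · exact h

end MajoranaSetting
namespace MajoranaSetting
variable (S : MajoranaSetting)

lemma count_nodup_le_one {J : List S.Λ} (h : J.Nodup) (i : S.Λ) : J.count i ≤ 1 :=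
  List.nodup_iff_count_le_one.mp h i

lemma prodP {J K : List S.Λ} (hJ : J ∈ S.P) (hK : K ∈ S.P) :
    ∃ (ε : ℂ) (L : List S.Λ), IsSign ε ∧ L ∈ S.P ∧
      (J = K → ε = S.q J ∧ L = []) ∧ (J ≠ K → L ≠ []) ∧
      S.C J * S.C K = ε • S.C L := by
  by_cases hJK : J = K
  · subst hJK
    exact ⟨S.q J, [], S.isSign_q J, S.nil_mem_P, fun _ => ⟨rfl, rfl⟩,
      fun h => absurd rfl h, by rw [S.C_mul_self J (S.P_nodup J hJ), S.C_nil]⟩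
  · obtain ⟨ε₀, L₀, hs₀, hnd₀, hodd, hsub, heq₀⟩ := S.C_reduce (J ++ K)
    have hL₀p : L₀.toFinset ⊆ S.Λp := by
      intro i hi
      rcases List.mem_append.mp (hsub i (List.mem_toFinset.mp hi)) with h | h
      · exact S.P_sub J hJ i h
      · exact S.P_sub K hK i h
    obtain ⟨L, ⟨hLP, hLfin⟩, _⟩ := S.P_unique L₀.toFinset hL₀p
    have hperm : L₀.Perm L := by
      have h1 : L₀.dedup = L₀ := List.dedup_eq_self.mpr hnd₀
      have h2 : L.dedup = L := List.dedup_eq_self.mpr (S.P_nodup L hLP)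
      have := List.toFinset_eq_iff_perm_dedup.mp hLfin.symm
      rwa [h1, h2] at this
    obtain ⟨ε₁, hs₁, heq₁⟩ := S.C_perm hperm
    refine ⟨ε₀ * ε₁, L, hs₀.mul hs₁, hLP, fun h => absurd h hJK, fun _ hL0 => ?_, ?_⟩
    · -- L = [] leads to J = K
      subst hL0
      have hL₀nil : L₀ = [] := (List.toFinset_eq_empty_iff _).mp (by simpa using hLfin.symm)
      apply hJK
      apply S.P_inj hJ hK
      ext i
      have hcnt : ¬ Odd ((J ++ K).count i) := by
        rw [← hodd i, hL₀nil]
        simp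
      rw [List.count_append] at hcnt
      have h1 := S.count_nodup_le_one (S.P_nodup J hJ) i
      have h2 := S.count_nodup_le_one (S.P_nodup K hK) i
      have hmemJ : i ∈ J ↔ J.count i = 1 := by
        constructor
        · intro h
          have := List.count_pos_iff.mpr h
          omega
        · intro h
          exact List.count_pos_iff.mp (by omega)
      have hmemK : i ∈ K ↔ K.count i = 1 := by
        constructor
        · intro h
          have := List.count_pos_iff.mpr h
          omega
        · intro h
          exact List.count_pos_iff.mp (by omega)
      simp only [List.mem_toFinset, hmemJ, hmemK]
      rw [Nat.odd_iff] at hcnt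
      omega
    · rw [← S.C_append, heq₀, heq₁, smul_smul]

lemma zeta_cancel (a b : ℕ) :
    S.ζ ^ (a % 2 * (b % 2)) * S.ζ ^ (a % 2 * (b % 2)) * (-1:ℂ) ^ (a * b) = 1 := by
  rw [← pow_add, ← two_mul, pow_mul, S.ζ_sq, ← pow_add, neg_one_pow_eq_pow_mod_two]
  have hx := Nat.mul_mod a b 2
  have hz : (a % 2 * (b % 2) + a * b) % 2 = 0 := by
    rcases Nat.mod_two_eq_zero_or_one a with h | h <;>
      rcases Nat.mod_two_eq_zero_or_one b with h' | h' <;> rw [h, h'] at hx ⊢ <;> omega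
  rw [hz, pow_zero]

lemma conj_sign {ε : ℂ} (h : IsSign ε) : (starRingEnd ℂ) ε = ε := by
  rcases h with h | h <;> simp [h]

lemma conj_q (J : List S.Λ) : (starRingEnd ℂ) (S.q J) = S.q J :=
  conj_sign (S.isSign_q J)

lemma q_mul_self (J : List S.Λ) : S.q J * S.q J = 1 := by
  rcases S.isSign_q J with h | h <;> rw [h] <;> norm_num

lemma Θ_smul_sign {ε : ℂ} (h : IsSign ε) (x : S.carrier) : S.Θ (ε • x) = ε • S.Θ x := by
  rw [S.Θ_smul, conj_sign h]

end MajoranaSetting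
namespace MajoranaSetting
variable (S : MajoranaSetting)

lemma Tr_twist_twist {J J' K K' : List S.Λ}
    (hJ : J ∈ S.P) (hJ' : J' ∈ S.P) (hK : K ∈ S.P) (hK' : K' ∈ S.P) :
    S.Tr (S.twist (S.Θ (S.C J)) (S.C J') * S.twist (S.Θ (S.C K)) (S.C K'))
      = if J = K ∧ J' = K' then S.q J * S.q J' else 0 := by
  have hJp := S.P_sub J hJ
  have hJ'p := S.P_sub J' hJ'
  have hKp := S.P_sub K hK
  have hK'p := S.P_sub K' hK'
  rw [S.twist_CC hJp hJ'p, S.twist_CC hKp hK'p]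
  -- commute `C J'` past `Θ (C K)`
  have hdisj : ∀ i ∈ J', ∀ j ∈ K.map S.ϑ, i ≠ j := by
    intro i hi j hj
    obtain ⟨k, hk, rfl⟩ := List.mem_map.mp hj
    intro hij
    exact ((S.ϑ_exch k).mp (hKp k hk)) (hij ▸ hJ'p i hi)
  have hmid : S.C J' * S.Θ (S.C K)
      = ((-1:ℂ) ^ (J'.length * K.length)) • (S.Θ (S.C K) * S.C J') := by
    rw [S.Θ_C]
    simpa [List.length_map] using S.C_cross hdisj
  obtain ⟨ε, L, hs, hLP, heq_case, hne_case, heq⟩ := S.prodP hJ hK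
  obtain ⟨ε', L', hs', hLP', heq_case', hne_case', heq'⟩ := S.prodP hJ' hK'
  have hprod : (S.Θ (S.C J) * S.C J') * (S.Θ (S.C K) * S.C K')
      = ((-1:ℂ) ^ (J'.length * K.length) * ε * ε') • (S.Θ (S.C L) * S.C L') := by
    calc (S.Θ (S.C J) * S.C J') * (S.Θ (S.C K) * S.C K')
        = S.Θ (S.C J) * (S.C J' * S.Θ (S.C K)) * S.C K' := by noncomm_ring
      _ = ((-1:ℂ) ^ (J'.length * K.length)) •
            ((S.Θ (S.C J) * S.Θ (S.C K)) * (S.C J' * S.C K')) := by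
          rw [hmid, mul_smul_comm, smul_mul_assoc]
          congr 1
          noncomm_ring
      _ = ((-1:ℂ) ^ (J'.length * K.length)) • ((S.Θ (S.C J * S.C K)) * (S.C J' * S.C K')) := by
          rw [S.Θ_mul]
      _ = ((-1:ℂ) ^ (J'.length * K.length)) • ((ε • S.Θ (S.C L)) * (ε' • S.C L')) := by
          rw [heq, heq', S.Θ_smul_sign hs]
      _ = ((-1:ℂ) ^ (J'.length * K.length) * ε * ε') • (S.Θ (S.C L) * S.C L') := by
          rw [smul_mul_assoc, mul_smul_comm, smul_smul, smul_smul]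
  rw [smul_mul_assoc, mul_smul_comm, hprod, smul_smul, smul_smul, map_smul, smul_eq_mul,
    S.Tr_ΘCC hLP hLP']
  by_cases hcase : J = K ∧ J' = K'
  · obtain ⟨h1, h2⟩ := hcase
    obtain ⟨hε, hL⟩ := heq_case h1
    obtain ⟨hε', hL'⟩ := heq_case' h2
    rw [if_pos ⟨hL, hL'⟩, if_pos ⟨h1, h2⟩, hε, hε', mul_one]
    subst h1; subst h2
    have hz := S.zeta_cancel J.length J'.length
    linear_combination (S.q J * S.q J') * hz
  · rw [if_neg hcase]
    have : ¬ (L = [] ∧ L' = []) := by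
      intro ⟨hL, hL'⟩
      rcases not_and_or.mp hcase with h | h
      · exact hne_case h hL
      · exact hne_case' h hL'
    rw [if_neg this, mul_zero]

end MajoranaSetting
namespace MajoranaSetting
variable (S : MajoranaSetting)

lemma twist_zero_left (y : S.carrier) : S.twist 0 y = 0 := by
  have := S.twist_smul_left 0 0 y
  simpa using this

lemma twist_zero_right (y : S.carrier) : S.twist y 0 = 0 := by
  have := S.twist_smul_right 0 y 0
  simpa using this

lemma Θ_sum {ι : Type*} (s : Finset ι) (f : ι → S.carrier) :
    S.Θ (∑ i ∈ s, f i) = ∑ i ∈ s, S.Θ (f i) := by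
  classical
  induction s using Finset.cons_induction with
  | empty => simpa using S.Θ_zero
  | cons i s hi ih => rw [Finset.sum_cons, Finset.sum_cons, S.Θ_add, ih]

lemma twist_sum_left {ι : Type*} (s : Finset ι) (f : ι → S.carrier) (y : S.carrier) :
    S.twist (∑ i ∈ s, f i) y = ∑ i ∈ s, S.twist (f i) y := by
  classical
  induction s using Finset.cons_induction with
  | empty => simpa using S.twist_zero_left y
  | cons i s hi ih => rw [Finset.sum_cons, Finset.sum_cons, S.twist_add_left, ih]

lemma twist_sum_right {ι : Type*} (s : Finset ι) (f : ι → S.carrier) (y : S.carrier) :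
    S.twist y (∑ i ∈ s, f i) = ∑ i ∈ s, S.twist y (f i) := by
  classical
  induction s using Finset.cons_induction with
  | empty => simpa using S.twist_zero_right y
  | cons i s hi ih => rw [Finset.sum_cons, Finset.sum_cons, S.twist_add_right, ih]

lemma omega_formula (r : List S.Λ → List S.Λ → ℂ) (a : S.PIdx → ℂ) :
    S.Tr (S.twist (S.Θ (∑ p : S.PIdx, a p • S.C p.1)) (∑ p : S.PIdx, a p • S.C p.1) *
      (∑ J ∈ S.P, ∑ J' ∈ S.P, r J J' • S.twist (S.Θ (S.C J)) (S.C J'))) =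
    ∑ p : S.PIdx, ∑ p' : S.PIdx,
      (starRingEnd ℂ) (S.q p.1 * a p) * (r p.1 p'.1 * (S.q p'.1 * a p')) := by
  classical
  have hR : (∑ J ∈ S.P, ∑ J' ∈ S.P, r J J' • S.twist (S.Θ (S.C J)) (S.C J'))
      = ∑ q : S.PIdx, ∑ q' : S.PIdx, r q.1 q'.1 • S.twist (S.Θ (S.C q.1)) (S.C q'.1) := by
    rw [Finset.sum_coe_sort S.P
      (fun q => ∑ q' : S.PIdx, r q q'.1 • S.twist (S.Θ (S.C q)) (S.C q'.1))]
    apply Finset.sum_congr rfl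
    intro J hJ
    rw [Finset.sum_coe_sort S.P (fun q' => r J q' • S.twist (S.Θ (S.C J)) (S.C q'))]
  have hA : S.Θ (∑ p : S.PIdx, a p • S.C p.1)
      = ∑ p : S.PIdx, (starRingEnd ℂ) (a p) • S.Θ (S.C p.1) := by
    rw [S.Θ_sum]
    exact Finset.sum_congr rfl fun p _ => S.Θ_smul (a p) (S.C p.1)
  have htw : S.twist (S.Θ (∑ p : S.PIdx, a p • S.C p.1)) (∑ p : S.PIdx, a p • S.C p.1)
      = ∑ p : S.PIdx, ∑ p' : S.PIdx, ((starRingEnd ℂ) (a p) * a p') •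
        S.twist (S.Θ (S.C p.1)) (S.C p'.1) := by
    rw [hA, S.twist_sum_left]
    apply Finset.sum_congr rfl
    intro p _
    rw [S.twist_smul_left, S.twist_sum_right, Finset.smul_sum]
    apply Finset.sum_congr rfl
    intro p' _
    rw [S.twist_smul_right, smul_smul]
  rw [htw, hR]
  rw [Finset.sum_mul]
  rw [map_sum]
  apply Finset.sum_congr rfl
  intro p _
  rw [Finset.sum_mul, map_sum]
  apply Finset.sum_congr rfl
  intro p' _
  rw [smul_mul_assoc, Finset.mul_sum, map_smul, smul_eq_mul]
  have hinner : ∀ q : S.PIdx,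
      S.twist (S.Θ (S.C p.1)) (S.C p'.1) * (∑ q' : S.PIdx, r q.1 q'.1 •
        S.twist (S.Θ (S.C q.1)) (S.C q'.1))
      = ∑ q' : S.PIdx, r q.1 q'.1 •
          (S.twist (S.Θ (S.C p.1)) (S.C p'.1) * S.twist (S.Θ (S.C q.1)) (S.C q'.1)) := by
    intro q
    rw [Finset.mul_sum]
    exact Finset.sum_congr rfl fun q' _ => (mul_smul_comm _ _ _)
  calc (starRingEnd ℂ) (a p) * a p' *
        S.Tr (∑ q : S.PIdx, S.twist (S.Θ (S.C p.1)) (S.C p'.1) *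
          (∑ q' : S.PIdx, r q.1 q'.1 • S.twist (S.Θ (S.C q.1)) (S.C q'.1)))
      = (starRingEnd ℂ) (a p) * a p' * (S.q p.1 * S.q p'.1 * r p.1 p'.1) := by
        congr 1
        rw [Finset.sum_congr rfl fun q _ => hinner q]
        rw [map_sum]
        have : ∀ q : S.PIdx, S.Tr (∑ q' : S.PIdx, r q.1 q'.1 •
            (S.twist (S.Θ (S.C p.1)) (S.C p'.1) * S.twist (S.Θ (S.C q.1)) (S.C q'.1)))
            = ∑ q' : S.PIdx, r q.1 q'.1 *
              (if p = q ∧ p' = q' then S.q p.1 * S.q p'.1 else 0) := by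
          intro q
          rw [map_sum]
          apply Finset.sum_congr rfl
          intro q' _
          rw [map_smul, smul_eq_mul, S.Tr_twist_twist p.2 p'.2 q.2 q'.2]
          congr 1
          simp only [Subtype.ext_iff]
        rw [Finset.sum_congr rfl fun q _ => this q]
        simp [Finset.sum_ite_eq', Finset.mul_sum, ite_and]
        ring
      _ = (starRingEnd ℂ) (S.q p.1 * a p) * (r p.1 p'.1 * (S.q p'.1 * a p')) := by
        rw [map_mul, S.conj_q]
        ring

end MajoranaSetting
open ComplexOrder in
lemma herm_of_quad {n : Type} [Fintype n] [DecidableEq n] (M : Matrix n n ℂ)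
    (h : ∀ x, 0 ≤ dotProduct (star x) (M.mulVec x)) : M.IsHermitian := by
  set B : (n → ℂ) → (n → ℂ) → ℂ := fun x y => dotProduct (star x) (M.mulVec y) with hB
  have hreal : ∀ x : n → ℂ, (starRingEnd ℂ) (B x x) = B x x := by
    intro x
    have := h x
    rw [Complex.le_def] at this
    exact Complex.conj_eq_iff_im.2 this.2.symm
  have hadd : ∀ x y, B (x + y) (x + y) = B x x + B x y + B y x + B y y := by
    intro x y
    simp only [hB, star_add, Matrix.mulVec_add, add_dotProduct,
      dotProduct_add]
    ring
  have hsmul : ∀ (c : ℂ) x y, B (c • x) y = (starRingEnd ℂ) c * B x y := by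
    intro c x y
    simp [hB, smul_dotProduct, star_smul, smul_eq_mul, Complex.star_def]
  have hsmul' : ∀ (c : ℂ) x y, B x (c • y) = c * B x y := by
    intro c x y
    simp [hB, Matrix.mulVec_smul, dotProduct_smul, smul_eq_mul]
  have key : ∀ x y, (starRingEnd ℂ) (B x y) = B y x := by
    intro x y
    have h1 := hreal (x + y)
    rw [hadd x y] at h1
    simp only [map_add, hreal x, hreal y] at h1
    have e1 : (starRingEnd ℂ) (B x y) + (starRingEnd ℂ) (B y x) = B x y + B y x := by
      linear_combination h1
    have h2 := hreal (x + Complex.I • y)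
    rw [hadd x (Complex.I • y)] at h2
    simp only [hsmul, hsmul', map_add, map_mul, hreal x, hreal y, Complex.conj_I,
      Complex.conj_neg_I] at h2
    have e2 : Complex.I * ((starRingEnd ℂ) (B x y) - B y x)
        = Complex.I * ((starRingEnd ℂ) (B y x) - B x y) := by
      linear_combination -h2
    have e2' := mul_left_cancel₀ Complex.I_ne_zero e2
    linear_combination (e1 + e2') / 2
  have entry : ∀ i j, B (Pi.single i 1) (Pi.single j 1) = M i j := by
    intro i j
    simp [hB, dotProduct, Matrix.mulVec, Pi.single_apply, Finset.mul_sum,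
      apply_ite, mul_comm]
  ext i j
  rw [Matrix.conjTranspose_apply, ← entry j i, ← entry i j, Complex.star_def, key]

/-- Basic Reflection Positivity: `ω(A) = Tr(A·R)` with
`R = ∑ r_{𝔍𝔍'} Θ(C_𝔍)∘C_𝔍'` is reflection positive on `𝔄₊` iff the matrix
`(r_{𝔍𝔍'})` is positive semidefinite. -/
theorem basic_reflection_positivity (S : MajoranaSetting)
    (r : List S.Λ → List S.Λ → ℂ) (R : S.carrier)
    (hR : R = ∑ J ∈ S.P, ∑ J' ∈ S.P, r J J' • S.twist (S.Θ (S.C J)) (S.C J')) :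
    (∀ A ∈ S.Aplus, 0 ≤ S.Tr (S.twist (S.Θ A) A * R)) ↔
      (Matrix.of fun p q : S.PIdx => r p.1 q.1).PosSemidef := by
  classical
  subst hR
  set M := (Matrix.of fun p q : S.PIdx => r p.1 q.1) with hM
  have hqf : ∀ x : S.PIdx → ℂ,
      dotProduct (star x) (M.mulVec x)
        = ∑ p : S.PIdx, ∑ p' : S.PIdx, (starRingEnd ℂ) (x p) * (r p.1 p'.1 * x p') := by
    intro x
    simp only [dotProduct, Matrix.mulVec, Pi.star_apply, Complex.star_def, hM,
      Matrix.of_apply, Finset.mul_sum]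
  have hmem : ∀ a : S.PIdx → ℂ, (∑ p : S.PIdx, a p • S.C p.1) ∈ S.Aplus := by
    intro a
    refine Subalgebra.sum_mem _ fun p _ => Subalgebra.smul_mem _ ?_ _
    exact S.C_mem_adjoin (fun i hi => S.P_sub p.1 p.2 i hi)
  constructor
  · intro hRP
    have hquad : ∀ x : S.PIdx → ℂ, 0 ≤ dotProduct (star x) (M.mulVec x) := by
      intro x
      set a : S.PIdx → ℂ := fun p => S.q p.1 * x p with ha
      have h1 := hRP _ (hmem a)
      rw [S.omega_formula r a] at h1
      have h2 : ∀ p : S.PIdx, S.q p.1 * a p = x p := by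
        intro p
        rw [ha]
        dsimp only
        rw [← mul_assoc, S.q_mul_self, one_mul]
      rw [Finset.sum_congr rfl (fun p _ => Finset.sum_congr rfl
        (fun p' _ => by rw [h2 p, h2 p']))] at h1
      rw [hqf x]
      exact h1
    exact Matrix.PosSemidef.of_dotProduct_mulVec_nonneg (herm_of_quad M hquad) hquad
  · intro hPSD A hA
    have hsp := S.plus_span A hA
    obtain ⟨a, haA⟩ := (Submodule.mem_span_range_iff_exists_fun ℂ).mp hsp
    have haA' : (∑ p : S.PIdx, a p • S.C p.1) = A := haA
    rw [← haA', S.omega_formula r a]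
    have h3 := hPSD.dotProduct_mulVec_nonneg (fun p => S.q p.1 * a p)
    rw [hqf] at h3
    exact h3
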